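/- Let q be the (1 − δ/(2(1+e^ε)))-quantile of Lap(2/ε), let γ, ν be independent Lap(2/ε) random variables, and set T̂ := T + γ − 2q. If t is an index with f_t(D) ≥ T, then P( f_t(D) + ν < T̂ ) ≤ δ/(1 + e^ε). In particular, the probability that the mechanism which halts at the first i with f_i(D) + ν_i ≥ T̂ (with independent ν_i ~ Lap(2/ε)) fails to have halted by step t is at most δ/(1 + e^ε). -/

import Mathlib

open MeasureTheory Real Set

/-- The Laplace distribution on ℝ with location 0 and scale `b`. -/
noncomputable def laplace (b : ℝ) : Measure ℝ :=
  volume.withDensity fun x => ENNReal.ofReal ((2 * b)⁻¹ * Real.exp (-|x| / b))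

instance (b : ℝ) : SigmaFinite (laplace b) := by
  unfold laplace; infer_instance

lemma laplace_meas (b : ℝ) :
    Measurable fun x : ℝ => ENNReal.ofReal ((2 * b)⁻¹ * Real.exp (-|x| / b)) := by
  measurability

lemma laplace_apply (b : ℝ) {s : Set ℝ} (hs : MeasurableSet s) :
    laplace b s = ∫⁻ x in s, ENNReal.ofReal ((2 * b)⁻¹ * Real.exp (-|x| / b)) := by
  rw [laplace, withDensity_apply _ hs]

lemma laplace_neg (b : ℝ) {s : Set ℝ} (hs : MeasurableSet s) :
    laplace b (Neg.neg ⁻¹' s) = laplace b s := by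
  rw [laplace_apply _ (hs.preimage measurable_neg), laplace_apply _ hs]
  rw [← (Measure.measurePreserving_neg (volume : Measure ℝ)).setLIntegral_comp_preimage hs
    (laplace_meas b)]
  refine setLIntegral_congr_fun (hs.preimage measurable_neg) (fun x _ => ?_)
  simp [abs_neg]

lemma laplace_Ioi_zero {b : ℝ} (hb : 0 < b) :
    laplace b (Ioi 0) = ENNReal.ofReal (2⁻¹ : ℝ) := by
  rw [laplace_apply _ measurableSet_Ioi]
  have heq : ∀ x ∈ Ioi (0:ℝ), ENNReal.ofReal ((2 * b)⁻¹ * Real.exp (-|x| / b))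
      = ENNReal.ofReal (2⁻¹ : ℝ) * ProbabilityTheory.exponentialPDF b⁻¹ x := by
    intro x hx
    rw [ProbabilityTheory.exponentialPDF_of_nonneg (le_of_lt hx),
      ← ENNReal.ofReal_mul (by norm_num), abs_of_pos hx]
    congr 1
    rw [show -x / b = -(b⁻¹ * x) by ring, mul_inv]
    ring
  have hm : Measurable (ProbabilityTheory.exponentialPDF b⁻¹) :=
    (ProbabilityTheory.measurable_exponentialPDFReal b⁻¹).ennreal_ofReal
  rw [setLIntegral_congr_fun measurableSet_Ioi heq, lintegral_const_mul _ hm]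
  have h1 : ∫⁻ x in Ioi (0:ℝ), ProbabilityTheory.exponentialPDF b⁻¹ x = 1 := by
    have htot := ProbabilityTheory.lintegral_exponentialPDF_eq_one (r := b⁻¹) (inv_pos.mpr hb)
    have hzero : ∫⁻ x in Iio (0:ℝ), ProbabilityTheory.exponentialPDF b⁻¹ x = 0 :=
      ProbabilityTheory.lintegral_exponentialPDF_of_nonpos le_rfl
    have hsplit : (∫⁻ x, ProbabilityTheory.exponentialPDF b⁻¹ x)
        = (∫⁻ x in Iio (0:ℝ), ProbabilityTheory.exponentialPDF b⁻¹ x)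
          + ∫⁻ x in Ici (0:ℝ), ProbabilityTheory.exponentialPDF b⁻¹ x := by
      rw [← lintegral_union measurableSet_Ici (by simp [Set.disjoint_left]),
        Iio_union_Ici, Measure.restrict_univ]
    rw [setLIntegral_congr Ioi_ae_eq_Ici]
    rw [hsplit, hzero, zero_add] at htot
    exact htot
  rw [h1, mul_one]

lemma laplace_univ {b : ℝ} (hb : 0 < b) : laplace b Set.univ = 1 := by
  have hsplit : laplace b Set.univ = laplace b (Iio 0) + laplace b (Ici 0) := by
    rw [← measure_union (by simp [Set.disjoint_left]) measurableSet_Ici, Iio_union_Ici]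
  have hIio : laplace b (Iio 0) = laplace b (Ioi 0) := by
    have h : (Neg.neg ⁻¹' (Ioi (0:ℝ))) = Iio 0 := by ext x; simp
    rw [← h, laplace_neg b measurableSet_Ioi]
  have hIci : laplace b (Ici 0) = laplace b (Ioi 0) := by
    rw [laplace_apply _ measurableSet_Ici, laplace_apply _ measurableSet_Ioi,
      setLIntegral_congr Ioi_ae_eq_Ici]
  rw [hsplit, hIio, hIci, laplace_Ioi_zero hb, ← ENNReal.ofReal_add (by norm_num) (by norm_num)]
  norm_num

lemma laplace_prob {b : ℝ} (hb : 0 < b) : IsProbabilityMeasure (laplace b) :=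
  ⟨laplace_univ hb⟩

/-- Let `q` be the `(1 − δ/(2(1+e^ε)))`-quantile of `Lap(2/ε)`, let `γ, ν` (and `ν_i`) be
independent `Lap(2/ε)` samples, and `T̂ := T + γ − 2q`.  If `f_t(D) ≥ T` (here `f i`
denotes `f_i(D)` for the fixed dataset `D`) then `P(f_t(D) + ν < T̂) ≤ δ/(1+e^ε)`; in
particular the probability that the mechanism halting at the first `i` with
`f_i(D) + ν_i ≥ T̂` has not halted by step `t` is at most `δ/(1+e^ε)`.  In the first
event the sample is `(γ, ν)`; in the second it is `(γ, (ν_1, …, ν_t))`. -/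
theorem stmt_12 (ε δ T : ℝ) (hε : 0 < ε) (hδ : δ ∈ Set.Ioo (0 : ℝ) 1)
    (q : ℝ)
    (hq : laplace (2 / ε) (Set.Iic q) =
      ENNReal.ofReal (1 - δ / (2 * (1 + Real.exp ε))))
    (f : ℕ → ℝ) (t : ℕ) (ht : 1 ≤ t) (hft : T ≤ f t) :
    (laplace (2 / ε)).prod (laplace (2 / ε))
        {p : ℝ × ℝ | f t + p.2 < T + p.1 - 2 * q} ≤
      ENNReal.ofReal (δ / (1 + Real.exp ε)) ∧
    (laplace (2 / ε)).prod (Measure.pi fun _ : Fin t => laplace (2 / ε))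
        {p : ℝ × (Fin t → ℝ) | ∀ i : Fin t, f ((i : ℕ) + 1) + p.2 i < T + p.1 - 2 * q} ≤
      ENNReal.ofReal (δ / (1 + Real.exp ε)) := by

  have hb : (0:ℝ) < 2 / ε := by positivity
  set b := 2 / ε with hb_def
  haveI hprob : IsProbabilityMeasure (laplace b) := laplace_prob hb
  set a := δ / (2 * (1 + Real.exp ε)) with ha_def
  have hexp : (1:ℝ) < Real.exp ε := by nlinarith [Real.add_one_le_exp ε]
  have hEpos : (0:ℝ) < 1 + Real.exp ε := by positivity
  have ha_pos : 0 < a := by have := hδ.1; positivity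
  have ha_lt : a < 1 := by
    rw [ha_def, div_lt_one (by positivity)]
    nlinarith [hδ.2]
  have hIoi : laplace b (Ioi q) = ENNReal.ofReal a := by
    have hc := measure_compl (μ := laplace b) measurableSet_Iic (measure_ne_top _ (Set.Iic q))
    rw [Set.compl_Iic] at hc
    rw [hc, measure_univ, hq, ← ENNReal.ofReal_one,
      ← ENNReal.ofReal_sub _ (by linarith : (0:ℝ) ≤ 1 - a)]
    congr 1; ring
  have hIio : laplace b (Iio (-q)) = ENNReal.ofReal a := by
    have h : Neg.neg ⁻¹' (Ioi q) = Iio (-q) := by ext x; simp [lt_neg]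
    rw [← h, laplace_neg b measurableSet_Ioi, hIoi]
  have hsum : ENNReal.ofReal a + ENNReal.ofReal a = ENNReal.ofReal (δ / (1 + Real.exp ε)) := by
    rw [← ENNReal.ofReal_add ha_pos.le ha_pos.le]
    congr 1
    rw [ha_def]
    field_simp
    ring
  constructor
  · have hsub : {p : ℝ × ℝ | f t + p.2 < T + p.1 - 2 * q}
        ⊆ (Ioi q ×ˢ (univ : Set ℝ)) ∪ ((univ : Set ℝ) ×ˢ Iio (-q)) := by
      intro p hp
      simp only [Set.mem_setOf_eq] at hp
      simp only [Set.mem_union, Set.mem_prod, Set.mem_Ioi, Set.mem_Iio, Set.mem_univ,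
        and_true, true_and]
      by_contra hc
      push_neg at hc
      obtain ⟨h1, h2⟩ := hc
      linarith
    calc (laplace b).prod (laplace b) {p : ℝ × ℝ | f t + p.2 < T + p.1 - 2 * q}
        ≤ (laplace b).prod (laplace b)
            ((Ioi q ×ˢ (univ : Set ℝ)) ∪ ((univ : Set ℝ) ×ˢ Iio (-q))) := measure_mono hsub
      _ ≤ (laplace b).prod (laplace b) (Ioi q ×ˢ (univ : Set ℝ))
          + (laplace b).prod (laplace b) ((univ : Set ℝ) ×ˢ Iio (-q)) := measure_union_le _ _
      _ = ENNReal.ofReal (δ / (1 + Real.exp ε)) := by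
          rw [Measure.prod_prod, Measure.prod_prod, measure_univ, mul_one, one_mul,
            hIoi, hIio, hsum]
  · set j : Fin t := ⟨t - 1, by omega⟩ with hj_def
    have hj : (j : ℕ) + 1 = t := by simp [hj_def]; omega
    haveI : ∀ i : Fin t, IsProbabilityMeasure ((fun _ : Fin t => laplace b) i) := fun _ => hprob
    have hpi : Measure.pi (fun _ : Fin t => laplace b)
        (Function.eval j ⁻¹' Iio (-q)) = ENNReal.ofReal a := by
      rw [Set.eval_preimage, Measure.pi_pi,
        Finset.prod_eq_single j
          (fun i _ hij => by simp [Function.update_of_ne hij, measure_univ])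
          (by simp)]
      simp [Function.update_self, hIio]
    have hsub : {p : ℝ × (Fin t → ℝ) | ∀ i : Fin t, f ((i : ℕ) + 1) + p.2 i < T + p.1 - 2 * q}
        ⊆ (Ioi q ×ˢ (univ : Set (Fin t → ℝ)))
          ∪ ((univ : Set ℝ) ×ˢ (Function.eval j ⁻¹' Iio (-q))) := by
      intro p hp
      simp only [Set.mem_setOf_eq] at hp
      have hpj := hp j
      rw [hj] at hpj
      simp only [Set.mem_union, Set.mem_prod, Set.mem_Ioi, Set.mem_Iio, Set.mem_univ,
        and_true, true_and, Set.mem_preimage, Function.eval]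
      by_contra hc
      push_neg at hc
      obtain ⟨h1, h2⟩ := hc
      linarith
    calc (laplace b).prod (Measure.pi fun _ : Fin t => laplace b)
          {p : ℝ × (Fin t → ℝ) | ∀ i : Fin t, f ((i : ℕ) + 1) + p.2 i < T + p.1 - 2 * q}
        ≤ (laplace b).prod (Measure.pi fun _ : Fin t => laplace b)
            ((Ioi q ×ˢ (univ : Set (Fin t → ℝ)))
              ∪ ((univ : Set ℝ) ×ˢ (Function.eval j ⁻¹' Iio (-q)))) := measure_mono hsub
      _ ≤ (laplace b).prod (Measure.pi fun _ : Fin t => laplace b)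
            (Ioi q ×ˢ (univ : Set (Fin t → ℝ)))
          + (laplace b).prod (Measure.pi fun _ : Fin t => laplace b)
            ((univ : Set ℝ) ×ˢ (Function.eval j ⁻¹' Iio (-q))) := measure_union_le _ _
      _ = ENNReal.ofReal (δ / (1 + Real.exp ε)) := by
          rw [Measure.prod_prod, Measure.prod_prod, measure_univ, measure_univ, mul_one,
            one_mul, hIoi, hpi, hsum]
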